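/- Let k be a positive integer and let (x, y) be real numbers satisfying (1+x)^4 + (k−1)x^4 = k·y^4 and (1+x−y)^4 + (k−1)(x−y)^4 = 2 with y > 0. Let a_1, …, a_k ∈ ℝ^k be the k cyclic permutations of the vector (1+x, x, x, …, x), and let a_{k+1} = (y, y, …, y). Then the set {a_1, …, a_{k+1}} is an equilateral set of k+1 points in ℓ_4^k with common distance 2^{1/4}, and ‖a_i‖_4 = k^{1/4}·y for every i = 1, …, k+1. -/

import Mathlib

open Finset

/-- The 4-norm on `ℝ^k`. -/
noncomputable def norm4 {k : ℕ} (x : Fin k → ℝ) : ℝ :=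
  (∑ m, (x m) ^ 4) ^ ((1 : ℝ) / 4)

lemma sum_if_aux (k : ℕ) (i₀ : Fin k) (A B : ℝ) :
    ∑ m : Fin k, (if m = i₀ then A else B) = A + ((k : ℝ) - 1) * B := by
  have h : ∀ m : Fin k, (if m = i₀ then A else B)
      = (if m = i₀ then A - B else 0) + B := by
    intro m; by_cases hm : m = i₀ <;> simp [hm]
  rw [Finset.sum_congr rfl fun m _ => h m, Finset.sum_add_distrib,
    Finset.sum_ite_eq' Finset.univ i₀ (fun _ => A - B)]
  simp [Finset.card_fin]
  ring

/-- **The construction.** If `(x, y)` solves the system with `y > 0`, and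
`a₁, …, a_k` are the `k` cyclic permutations of `(1+x, x, …, x)` with
`a_{k+1} = (y, …, y)`, then `{a₁, …, a_{k+1}}` is an equilateral set of `k+1` points
in `ℓ₄ᵏ` with common distance `2^{1/4}`, and each point has 4-norm `k^{1/4}·y`. -/
theorem stmt18 (k : ℕ) (hk : 1 ≤ k) (x y : ℝ) (hy : 0 < y)
    (h1 : (1 + x) ^ 4 + ((k : ℝ) - 1) * x ^ 4 = (k : ℝ) * y ^ 4)
    (h2 : (1 + x - y) ^ 4 + ((k : ℝ) - 1) * (x - y) ^ 4 = 2)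
    (a : Fin (k + 1) → Fin k → ℝ)
    (ha : ∀ i : Fin (k + 1), ∀ m : Fin k,
      a i m = if (i : ℕ) = k then y else if (m : ℕ) = (i : ℕ) then 1 + x else x) :
    Function.Injective a ∧
    (∀ i j : Fin (k + 1), i ≠ j → norm4 (a i - a j) = (2 : ℝ) ^ ((1 : ℝ) / 4)) ∧
    (∀ i : Fin (k + 1), norm4 (a i) = (k : ℝ) ^ ((1 : ℝ) / 4) * y) := by
  -- key distance sum
  have key : ∀ i j : Fin (k + 1), i ≠ j → ∑ m : Fin k, (a i m - a j m) ^ 4 = 2 := by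
    intro i j hij
    have hvalne : (i : ℕ) ≠ (j : ℕ) := fun h => hij (Fin.ext h)
    by_cases hi : (i : ℕ) = k <;> by_cases hj : (j : ℕ) = k
    · exact absurd (hi.trans hj.symm) hvalne
    · -- i = k, j < k
      have hj' : (j : ℕ) < k := lt_of_le_of_ne (Nat.lt_succ_iff.mp j.isLt) hj
      set j₀ : Fin k := ⟨j, hj'⟩ with hj₀
      have : ∀ m : Fin k, (a i m - a j m) ^ 4
          = (if m = j₀ then (1 + x - y) ^ 4 else (x - y) ^ 4) := by
        intro m
        rw [ha i m, ha j m]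
        have : ((m : ℕ) = (j : ℕ)) ↔ m = j₀ := by
          constructor
          · intro h; exact Fin.ext h
          · intro h; rw [h]
        by_cases hm : m = j₀
        · simp +zetaDelta [hi, hj, this, hm]; ring
        · simp [hi, hj, this, hm]; ring
      rw [Finset.sum_congr rfl fun m _ => this m, sum_if_aux, h2]
    · -- i < k, j = k
      have hi' : (i : ℕ) < k := lt_of_le_of_ne (Nat.lt_succ_iff.mp i.isLt) hi
      set i₀ : Fin k := ⟨i, hi'⟩ with hi₀
      have : ∀ m : Fin k, (a i m - a j m) ^ 4
          = (if m = i₀ then (1 + x - y) ^ 4 else (x - y) ^ 4) := by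
        intro m
        rw [ha i m, ha j m]
        have : ((m : ℕ) = (i : ℕ)) ↔ m = i₀ := by
          constructor
          · intro h; exact Fin.ext h
          · intro h; rw [h]
        by_cases hm : m = i₀
        · simp +zetaDelta [hi, hj, this, hm]
        · simp [hi, hj, this, hm]
      rw [Finset.sum_congr rfl fun m _ => this m, sum_if_aux, h2]
    · -- both < k
      have hi' : (i : ℕ) < k := lt_of_le_of_ne (Nat.lt_succ_iff.mp i.isLt) hi
      have hj' : (j : ℕ) < k := lt_of_le_of_ne (Nat.lt_succ_iff.mp j.isLt) hj
      set i₀ : Fin k := ⟨i, hi'⟩ with hi₀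
      set j₀ : Fin k := ⟨j, hj'⟩ with hj₀
      have hne : i₀ ≠ j₀ := by
        intro h
        exact hvalne (by simpa [hi₀, hj₀, Fin.ext_iff] using h)
      have : ∀ m : Fin k, (a i m - a j m) ^ 4
          = (if m = i₀ then (1:ℝ) else 0) + (if m = j₀ then (1:ℝ) else 0) := by
        intro m
        rw [ha i m, ha j m]
        have e1 : ((m : ℕ) = (i : ℕ)) ↔ m = i₀ := by
          constructor
          · intro h; exact Fin.ext h
          · intro h; rw [h]
        have e2 : ((m : ℕ) = (j : ℕ)) ↔ m = j₀ := by
          constructor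
          · intro h; exact Fin.ext h
          · intro h; rw [h]
        by_cases hm1 : m = i₀ <;> by_cases hm2 : m = j₀
        · exact absurd (hm1.symm.trans hm2) hne
        · simp +zetaDelta [hi, hj, e1, e2, hm1, hm2, hvalne, hne]
        · have h3 : (j:ℕ) ≠ (i:ℕ) := fun h => hvalne h.symm
          have h4 : j₀ ≠ i₀ := fun h => hne h.symm
          simp +zetaDelta [hi, hj, e1, e2, hm1, hm2, h3, h4]
          ring_nf
        · simp [hi, hj, e1, e2, hm1, hm2]
      rw [Finset.sum_congr rfl fun m _ => this m, Finset.sum_add_distrib,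
        Finset.sum_ite_eq' Finset.univ i₀ (fun _ => (1:ℝ)),
        Finset.sum_ite_eq' Finset.univ j₀ (fun _ => (1:ℝ))]
      norm_num
  have hdist : ∀ i j : Fin (k + 1), i ≠ j → norm4 (a i - a j) = (2 : ℝ) ^ ((1 : ℝ) / 4) := by
    intro i j hij
    unfold norm4
    have : ∀ m : Fin k, ((a i - a j) m) = a i m - a j m := fun m => rfl
    rw [Finset.sum_congr rfl fun m _ => by rw [this m], key i j hij]
  refine ⟨?_, hdist, ?_⟩
  · intro i j h
    by_contra hne
    have hd := hdist i j hne
    have h0 : a i - a j = 0 := by rw [h]; exact sub_self _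
    rw [h0] at hd
    unfold norm4 at hd
    simp at hd
    exact absurd hd.symm (ne_of_gt (Real.rpow_pos_of_pos (by norm_num) _))
  · intro i
    have hsum : ∑ m : Fin k, (a i m) ^ 4 = (k : ℝ) * y ^ 4 := by
      by_cases hi : (i : ℕ) = k
      · have : ∀ m : Fin k, (a i m) ^ 4 = y ^ 4 := by intro m; rw [ha i m]; simp [hi]
        rw [Finset.sum_congr rfl fun m _ => this m]
        simp [Finset.card_fin, mul_comm]
      · have hi' : (i : ℕ) < k := lt_of_le_of_ne (Nat.lt_succ_iff.mp i.isLt) hi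
        set i₀ : Fin k := ⟨i, hi'⟩ with hi₀
        have : ∀ m : Fin k, (a i m) ^ 4
            = (if m = i₀ then (1 + x) ^ 4 else x ^ 4) := by
          intro m
          rw [ha i m]
          have e1 : ((m : ℕ) = (i : ℕ)) ↔ m = i₀ := by
            constructor
            · intro h; exact Fin.ext h
            · intro h; rw [h]
          by_cases hm : m = i₀ <;> simp +zetaDelta [hi, e1, hm]
        rw [Finset.sum_congr rfl fun m _ => this m, sum_if_aux, h1]
    unfold norm4
    rw [hsum]
    have hk4 : (0:ℝ) ≤ (k : ℝ) := Nat.cast_nonneg k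
    rw [Real.mul_rpow hk4 (by positivity)]
    congr 1
    rw [show y ^ 4 = y ^ ((4:ℕ):ℝ) from (Real.rpow_natCast y 4).symm,
      ← Real.rpow_mul hy.le]
    norm_num
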